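/- Let F be an entire function of one complex variable whose restriction to ℝ is integrable and whose Fourier transform (as an L¹ function) vanishes outside [−2π, 2π]. If F(n) = 0 and F′(n) = 0 for every integer n, then F ≡ 0. -/

import Mathlib

open MeasureTheory Real Complex FourierTransform Filter

private lemma circ_zero (f : C(AddCircle (1:ℝ), ℂ))
    (h : ∀ n : ℤ, fourierCoeff (⇑f) n = 0) : ∀ t, f t = 0 := by
  haveI : Fact ((0:ℝ) < 1) := ⟨one_pos⟩
  have h1 : fourierBasis.repr (ContinuousMap.toLp (E := ℂ) 2 AddCircle.haarAddCircle ℂ f) = 0 := by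
    ext n
    rw [fourierBasis_repr, fourierCoeff_toLp]
    simpa using h n
  have h2 : ContinuousMap.toLp (E := ℂ) 2 AddCircle.haarAddCircle ℂ f = 0 := by
    have := fourierBasis.repr.injective (a₁ := ContinuousMap.toLp (E := ℂ) 2 AddCircle.haarAddCircle ℂ f)
      (a₂ := 0) (by rw [h1, map_zero])
    exact this
  have h3 : (⇑f) =ᵐ[AddCircle.haarAddCircle (T := 1)] (fun _ => (0:ℂ)) := by
    have e1 := ContinuousMap.coeFn_toLp (p := 2) (𝕜 := ℂ) (μ := AddCircle.haarAddCircle (T := 1)) f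
    rw [h2] at e1
    exact (e1.symm.trans (Lp.coeFn_zero _ _ _))
  have h4 := (Continuous.ae_eq_iff_eq (AddCircle.haarAddCircle (T := 1)) f.continuous continuous_const).mp h3
  intro t; exact congrFun h4 t

private lemma per_zero {h : ℝ → ℂ} (hc : Continuous h) (hs : ∀ y : ℝ, 1 ≤ |y| → h y = 0)
    (hco : ∀ n : ℤ, 𝓕 h n = 0) :
    ∀ ξ : ℝ, ξ ∈ Set.Ico (0:ℝ) 1 → h ξ + h (ξ - 1) = 0 := by
  haveI : Fact ((0:ℝ) < 1) := ⟨one_pos⟩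
  set Q : ℝ → ℂ := fun x => h x + h (x - 1) with hQdef
  have hQc : Continuous Q := hc.add (hc.comp (continuous_id.sub continuous_const))
  have hQper : Q 0 = Q 1 := by
    simp only [hQdef]
    rw [hs 1 (by norm_num), hs (0 - 1) (by norm_num)]
    norm_num
  have hPc : Continuous (AddCircle.liftIco 1 0 Q) :=
    AddCircle.liftIco_zero_continuous hQper hQc.continuousOn
  set f : C(AddCircle (1:ℝ), ℂ) := ⟨AddCircle.liftIco 1 0 Q, hPc⟩ with hfdef
  have key : ∀ t, f t = 0 := by
    apply circ_zero
    intro n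
    rw [fourierCoeff_eq_intervalIntegral (⇑f) n 0]
    have e1 : ∫ x in (0:ℝ)..0 + 1, fourier (-n) (x : AddCircle (1:ℝ)) • f (x : AddCircle (1:ℝ))
        = ∫ x in (0:ℝ)..1, Complex.exp (2 * π * Complex.I * (-n) * x / 1) * Q x := by
      rw [zero_add]
      apply intervalIntegral.integral_congr_ae
      have hae : ∀ᵐ x : ℝ, x ≠ (1:ℝ) := by
        rw [MeasureTheory.ae_iff]
        simp only [ne_eq, not_not]
        simpa using Real.volume_singleton
      filter_upwards [hae] with x hx hxmem
      rw [Set.uIoc_of_le (by norm_num : (0:ℝ) ≤ 1)] at hxmem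
      have hxIco : x ∈ Set.Ico (0:ℝ) 1 := ⟨hxmem.1.le, lt_of_le_of_ne hxmem.2 hx⟩
      rw [hfdef]
      simp only [ContinuousMap.coe_mk]
      rw [AddCircle.liftIco_zero_coe_apply hxIco, fourier_coe_apply, smul_eq_mul]
      norm_num
    rw [e1]
    -- split into two pieces
    set e : ℝ → ℂ := fun x => Complex.exp (2 * π * Complex.I * (-n) * x / 1) with hedef
    have hec : Continuous e := by
      apply Complex.continuous_exp.comp
      fun_prop
    have hper : ∀ x : ℝ, e (x + 1) = e x := by
      intro x
      simp only [hedef]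
      push_cast
      rw [show (2 * (π:ℂ) * Complex.I * (-(n:ℂ)) * ((x:ℂ) + 1) / 1 : ℂ)
          = (-n : ℤ) * (2 * (π:ℂ) * Complex.I) + 2 * (π:ℂ) * Complex.I * (-(n:ℂ)) * (x:ℂ) / 1 by
        push_cast; ring]
      rw [Complex.exp_add, Complex.exp_int_mul_two_pi_mul_I, one_mul]
    have hsplit : (∫ x in (0:ℝ)..1, e x * Q x)
        = (∫ x in (-1:ℝ)..0, e x * h x) + ∫ x in (0:ℝ)..1, e x * h x := by
      have : (∫ x in (0:ℝ)..1, e x * Q x)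
          = (∫ x in (0:ℝ)..1, e x * h x) + ∫ x in (0:ℝ)..1, e x * h (x - 1) := by
        rw [← intervalIntegral.integral_add]
        · apply intervalIntegral.integral_congr
          intro x _
          simp only [hQdef]; ring
        · exact ((hec.mul hc).intervalIntegrable _ _)
        · exact ((hec.mul (hc.comp (continuous_id.sub continuous_const))).intervalIntegrable _ _)
      rw [this]
      have h2 : (∫ x in (0:ℝ)..1, e x * h (x - 1)) = ∫ x in (-1:ℝ)..0, e x * h x := by
        have h3 : (∫ x in (0:ℝ)..1, e x * h (x - 1))
            = ∫ x in (0:ℝ)..1, (fun y => e (y + 1) * h y) (x - 1) := by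
          apply intervalIntegral.integral_congr
          intro x _
          simp only []
          rw [sub_add_cancel]
        rw [h3, intervalIntegral.integral_comp_sub_right (fun y => e (y + 1) * h y) 1]
        norm_num
        apply intervalIntegral.integral_congr
        intro x _
        show e (x + 1) * h x = e x * h x
        rw [hper x]
      rw [h2, add_comm]
    rw [hsplit]
    rw [intervalIntegral.integral_add_adjacent_intervals (f := fun x => e x * h x)
      ((hec.mul hc).intervalIntegrable _ _) ((hec.mul hc).intervalIntegrable _ _)]
    have hall : (∫ x in (-1:ℝ)..1, e x * h x) = ∫ x : ℝ, e x * h x := by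
      rw [intervalIntegral.integral_of_le (by norm_num : (-1:ℝ) ≤ 1)]
      apply MeasureTheory.setIntegral_eq_integral_of_forall_compl_eq_zero
      intro x hx
      have : 1 ≤ |x| := by
        simp only [Set.mem_Ioc, not_and_or, not_lt, not_le] at hx
        rcases hx with hx | hx
        · rw [abs_of_nonpos (by linarith)]; linarith
        · rw [abs_of_pos (by linarith)]; linarith
      rw [hs x this, mul_zero]
    rw [hall]
    have : (∫ x : ℝ, e x * h x) = 𝓕 h n := by
      rw [Real.fourier_real_eq_integral_exp_smul]
      apply MeasureTheory.integral_congr_ae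
      apply Filter.Eventually.of_forall
      intro v
      show e v * h v = Complex.exp (((-2 * π * v * (n:ℝ) : ℝ) : ℂ) * Complex.I) • h v
      rw [smul_eq_mul]
      simp only [hedef]
      congr 1
      push_cast
      ring
    rw [this, hco n, smul_zero]
  intro ξ hξ
  have := key (ξ : AddCircle (1:ℝ))
  rw [hfdef] at this
  simp only [ContinuousMap.coe_mk] at this
  rwa [AddCircle.liftIco_zero_coe_apply hξ] at this


/-- An entire function in the Bernstein space B¹_{[-2π,2π]} vanishing to second order at every
integer is identically zero. -/
theorem stmt4 (F : ℂ → ℂ) (hF : Differentiable ℂ F)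
    (hint : Integrable fun x : ℝ => F x)
    (hband : ∀ y : ℝ, 2 * Real.pi < |y| →
      ∫ t : ℝ, Complex.exp (-Complex.I * ((y * t : ℝ) : ℂ)) * F t = 0)
    (hzero : ∀ m : ℤ, F (m : ℂ) = 0 ∧ deriv F (m : ℂ) = 0) :
    ∀ z : ℂ, F z = 0 := by
  set f : ℝ → ℂ := fun x : ℝ => F ↑x with hfdef
  have hfc : Continuous f := hF.continuous.comp Complex.continuous_ofReal
  set g : ℝ → ℂ := 𝓕 f with hgdef
  have hgc : Continuous g :=
    VectorFourier.fourierIntegral_continuous Real.continuous_fourierChar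
      (by exact continuous_inner) hint
  have hband' : ∀ y : ℝ, 1 < |y| → g y = 0 := by
    intro y hy
    have hy2 : 2 * Real.pi < |2 * π * y| := by
      rw [abs_mul, abs_of_pos (by positivity : (0:ℝ) < 2 * π)]
      nlinarith [Real.pi_pos]
    have hb := hband (2 * π * y) hy2
    rw [hgdef, Real.fourier_real_eq_integral_exp_smul, ← hb]
    apply MeasureTheory.integral_congr_ae
    apply Filter.Eventually.of_forall
    intro v
    show Complex.exp (((-2 * π * v * y : ℝ) : ℂ) * Complex.I) • f v
      = Complex.exp (-Complex.I * ((2 * π * y * v : ℝ) : ℂ)) * F ↑v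
    rw [smul_eq_mul]
    congr 1
    push_cast
    ring_nf
  have hband1 : ∀ y : ℝ, 1 ≤ |y| → g y = 0 := by
    intro y hy
    rcases lt_or_eq_of_le hy with hlt | heq
    · exact hband' y hlt
    · -- |y| = 1
      have hysq : y = 1 ∨ y = -1 := by
        rcases abs_eq (by norm_num : (0:ℝ) ≤ 1) |>.mp heq.symm with h | h
        · exact Or.inl h
        · exact Or.inr h
      have htend : Tendsto (fun t : ℝ => g (t * y)) (nhdsWithin 1 (Set.Ioi 1)) (nhds (g y)) := by
        have h0 : Tendsto (fun t : ℝ => t * y) (nhds (1:ℝ)) (nhds y) := by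
          have := (continuous_id.mul (continuous_const (y := y))).tendsto (1:ℝ)
          simpa using (continuous_mul_right y).tendsto (1:ℝ)
        exact (hgc.tendsto y).comp (h0.mono_left nhdsWithin_le_nhds)
      have hzero' : ∀ᶠ t in nhdsWithin 1 (Set.Ioi (1:ℝ)), g (t * y) = 0 := by
        filter_upwards [self_mem_nhdsWithin] with t ht
        apply hband'
        have ht1 : (1:ℝ) < t := ht
        rw [abs_mul, ← heq, mul_one, abs_of_pos (by linarith)]
        exact ht1
      have hten0 : Tendsto (fun _ : ℝ => (0:ℂ)) (nhdsWithin 1 (Set.Ioi (1:ℝ))) (nhds (g y)) :=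
        htend.congr' (by filter_upwards [hzero'] with t ht; exact ht)
      exact (tendsto_nhds_unique hten0 tendsto_const_nhds)
  -- compact support and integrability of g
  have hout : ∀ x : ℝ, x ∉ Set.Icc (-1:ℝ) 1 → 1 ≤ |x| := by
    intro x hx
    rw [Set.mem_Icc, not_and_or, not_le, not_le] at hx
    rcases hx with hx | hx
    · rw [abs_of_neg (by linarith)]; linarith
    · rw [abs_of_pos (by linarith)]; linarith
  have hgsupp : HasCompactSupport g :=
    HasCompactSupport.intro isCompact_Icc (fun x hx => hband1 x (hout x hx))
  have hgint : Integrable g := hgc.integrable_of_hasCompactSupport hgsupp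
  -- Fourier inversion
  have hinv : 𝓕⁻ g = f := hfc.fourierInv_fourier_eq hint hgint
  -- coefficients of g
  have h1 : ∀ m : ℤ, 𝓕 g m = 0 := by
    intro m
    have h0 : 𝓕⁻ g (-(m:ℝ)) = f (-(m:ℝ)) := congrFun hinv _
    rw [Real.fourierInv_eq_fourier_neg, neg_neg] at h0
    rw [h0]
    show F ((-(m:ℝ) : ℝ) : ℂ) = 0
    rw [show ((-(m:ℝ) : ℝ) : ℂ) = ((-m : ℤ) : ℂ) by push_cast; ring]
    exact (hzero (-m)).1
  -- derivative data
  set e : ℝ → ℂ := fun ξ : ℝ => (-2 * π * Complex.I * ξ) • g ξ with hedef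
  have hec : Continuous e := by
    apply Continuous.fun_smul _ hgc
    fun_prop
  have hes : ∀ y : ℝ, 1 ≤ |y| → e y = 0 := by
    intro y hy; rw [hedef]; simp only []; rw [hband1 y hy, smul_zero]
  have hxgint : Integrable (fun x : ℝ => x • g x) := by
    apply Continuous.integrable_of_hasCompactSupport (by fun_prop)
    exact HasCompactSupport.intro isCompact_Icc
      (fun x hx => by rw [hband1 x (hout x hx), smul_zero])
  have h2 : ∀ m : ℤ, 𝓕 e m = 0 := by
    intro m
    have hD : HasDerivAt (𝓕 g) (𝓕 e ((m:ℝ))) ((fun y : ℝ => -y) (-(m:ℝ))) := by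
      simp only [neg_neg]
      exact Real.hasDerivAt_fourier hgint hxgint ((m:ℝ))
    have hcomp : HasDerivAt ((𝓕 g) ∘ (fun y : ℝ => -y)) ((-1 : ℝ) • 𝓕 e ((m:ℝ)))
        (-(m:ℝ)) := HasDerivAt.scomp _ hD (hasDerivAt_neg _)
    have hfun : ((𝓕 g) ∘ (fun y : ℝ => -y)) = f := by
      funext y
      show 𝓕 g (-y) = f y
      rw [← Real.fourierInv_eq_fourier_neg]
      exact congrFun hinv y
    rw [hfun] at hcomp
    have hFd : HasDerivAt f (deriv F ((-(m:ℝ) : ℝ) : ℂ)) (-(m:ℝ)) :=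
      (hF ((-(m:ℝ) : ℝ) : ℂ)).hasDerivAt.comp_ofReal
    have hder0 : deriv F ((-(m:ℝ) : ℝ) : ℂ) = 0 := by
      rw [show ((-(m:ℝ) : ℝ) : ℂ) = ((-m : ℤ) : ℂ) by push_cast; ring]
      exact (hzero (-m)).2
    rw [hder0] at hFd
    have huniq := hFd.unique hcomp
    have : 𝓕 e ((m:ℝ)) = 0 := by
      have h' := huniq.symm
      simpa using h'
    exact this
  -- periodization vanishing
  have P1 := per_zero hgc hband1 h1
  have P2 := per_zero hec hes h2
  -- conclude g = 0
  have hg0 : ∀ ξ : ℝ, g ξ = 0 := by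
    have key : ∀ ξ ∈ Set.Ico (0:ℝ) 1, g ξ = 0 := by
      intro ξ hξ
      have e1 := P1 ξ hξ
      have e2 := P2 ξ hξ
      simp only [hedef, smul_eq_mul] at e2
      have hg1 : g (ξ - 1) = -g ξ := by
        have := e1
        linear_combination this
      rw [hg1] at e2
      have hmain : (-2 * (π:ℂ) * Complex.I) * g ξ = 0 := by
        push_cast at e2 ⊢
        linear_combination e2
      have h2pi : (-2 * (π:ℂ) * Complex.I) ≠ 0 := by
        simp [Real.pi_ne_zero, Complex.I_ne_zero, Complex.ofReal_ne_zero]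
      exact (mul_eq_zero.mp hmain).resolve_left h2pi
    intro ξ
    rcases le_or_gt 1 |ξ| with h | h
    · exact hband1 ξ h
    · rw [abs_lt] at h
      rcases le_or_gt 0 ξ with h0 | h0
      · exact key ξ ⟨h0, h.2⟩
      · have hmem : ξ + 1 ∈ Set.Ico (0:ℝ) 1 := ⟨by linarith, by linarith⟩
        have e1 := P1 (ξ + 1) hmem
        have := key (ξ + 1) hmem
        rw [this] at e1
        have : g (ξ + 1 - 1) = 0 := by linear_combination e1
        simpa using this
  -- F vanishes on ℝ
  have hf0 : ∀ x : ℝ, F ↑x = 0 := by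
    intro x
    have h0 : 𝓕⁻ g x = f x := congrFun hinv x
    rw [Real.fourierInv_eq_fourier_neg] at h0
    have hzero' : 𝓕 g (-x) = 0 := by
      rw [Real.fourier_real_eq_integral_exp_smul]
      have : ∀ v : ℝ, Complex.exp (((-2 * π * v * (-x) : ℝ) : ℂ) * Complex.I) • g v = 0 := by
        intro v; rw [hg0 v, smul_zero]
      simp only [this, MeasureTheory.integral_zero]
    rw [hzero'] at h0
    exact h0.symm
  -- identity theorem
  intro z
  have hA : AnalyticOnNhd ℂ F Set.univ := analyticOnNhd_univ_iff_differentiable.mpr hF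
  have hfreq : ∃ᶠ w in nhdsWithin (0:ℂ) {(0:ℂ)}ᶜ, F w = 0 := by
    have htend : Tendsto (fun n : ℕ => (((1:ℝ)/(n+1) : ℝ) : ℂ)) atTop
        (nhdsWithin (0:ℂ) {(0:ℂ)}ᶜ) := by
      apply tendsto_nhdsWithin_of_tendsto_nhds_of_eventually_within
      · have : Tendsto (fun n : ℕ => ((1:ℝ)/(n+1))) atTop (nhds 0) :=
          tendsto_one_div_add_atTop_nhds_zero_nat
        have h1 := (Complex.continuous_ofReal.tendsto 0).comp this
        simpa only [Function.comp_def, Complex.ofReal_zero] using h1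
      · apply Filter.Eventually.of_forall
        intro n
        simp only [Set.mem_compl_iff, Set.mem_singleton_iff]
        intro hcontra
        have : ((1:ℝ)/(n+1) : ℝ) = 0 := by exact_mod_cast hcontra
        have hpos : (0:ℝ) < 1/(n+1) := by positivity
        linarith
    exact htend.frequently (Filter.Frequently.of_forall (fun n => hf0 _))
  exact hA.eqOn_zero_of_preconnected_of_frequently_eq_zero isPreconnected_univ
    (Set.mem_univ 0) hfreq (Set.mem_univ z)
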